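/- Let N ≥ 2 be an integer and λ > 0, and define X_λ : ℝ^N → ℝ by X_λ(x) := (N^{2N−1}/(N−1)^{N−1}) · λ^N · (1 + |λx|^{N/(N−1)})^{−N}, where |·| is the Euclidean norm. Then X_λ is integrable on ℝ^N with respect to Lebesgue measure and ∫_{ℝ^N} X_λ(x) dx = ω_N · (N²/(N−1))^{N−1}, where ω_N denotes the (N−1)-dimensional surface measure of the unit sphere S^{N−1} ⊂ ℝ^N (equivalently, ω_N = N times the Lebesgue measure of the unit ball in ℝ^N). In particular the value is independent of λ. -/

import Mathlib

open Set MeasureTheory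

open Real Filter Topology in
private lemma mass_aux (m : ℕ) (lam : ℝ) (hlam : 0 < lam) (c : ℝ) (hc : 0 < c)
    (p : ℝ) (hp : 0 < p) (hpm : p * ((m : ℝ) + 1) = (m : ℝ) + 2) :
    IntegrableOn (fun r : ℝ => r ^ (m + 1) *
        (c * lam ^ (m + 2) * (1 + (lam * r) ^ p) ^ (-((m : ℝ) + 2)))) (Ioi 0)
      ∧ (∫ r in Ioi (0 : ℝ), r ^ (m + 1) *
        (c * lam ^ (m + 2) * (1 + (lam * r) ^ p) ^ (-((m : ℝ) + 2))))
        = c / ((m : ℝ) + 2) := by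
  have hm1 : (0 : ℝ) < (m : ℝ) + 1 := by positivity
  have hm2 : (0 : ℝ) < (m : ℝ) + 2 := by positivity
  -- derivative
  have hderiv : ∀ r ∈ Ioi (0 : ℝ),
      HasDerivAt (fun t : ℝ => c / ((m : ℝ) + 2) *
          (((lam * t) ^ p) ^ (m + 1) / (1 + (lam * t) ^ p) ^ (m + 1)))
        (r ^ (m + 1) * (c * lam ^ (m + 2) * (1 + (lam * r) ^ p) ^ (-((m : ℝ) + 2)))) r := by
    intro r hr
    have hr : (0 : ℝ) < r := hr
    have hy : 0 < lam * r := mul_pos hlam hr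
    have hS : 0 < (lam * r) ^ p := rpow_pos_of_pos hy p
    have hT : 0 < 1 + (lam * r) ^ p := by linarith
    have hlin : HasDerivAt (fun t : ℝ => lam * t) lam r := by
      simpa using (hasDerivAt_id r).const_mul lam
    have hs' : HasDerivAt (fun t : ℝ => (lam * t) ^ p)
        (lam * p * (lam * r) ^ (p - 1)) r :=
      hlin.rpow_const (Or.inl hy.ne')
    have hu : HasDerivAt (fun t : ℝ => ((lam * t) ^ p) ^ (m + 1))
        (((m : ℝ) + 1) * ((lam * r) ^ p) ^ m * (lam * p * (lam * r) ^ (p - 1))) r := by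
      have := hs'.pow (m + 1)
      norm_num at this
      exact this
    have hv : HasDerivAt (fun t : ℝ => (1 + (lam * t) ^ p) ^ (m + 1))
        (((m : ℝ) + 1) * (1 + (lam * r) ^ p) ^ m * (lam * p * (lam * r) ^ (p - 1))) r := by
      have := (hs'.const_add 1).pow (m + 1)
      norm_num at this
      exact this
    have hv0 : (1 + (lam * r) ^ p) ^ (m + 1) ≠ 0 := by positivity
    have hF := (hu.div hv hv0).const_mul (c / ((m : ℝ) + 2))
    refine hF.congr_deriv ?_
    -- the algebraic identity
    have e1 : ((lam * r) ^ p) ^ m = (lam * r) ^ (p * m) := by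
      rw [← rpow_natCast ((lam * r) ^ p) m, ← rpow_mul hy.le]
    have e2 : p * (m : ℝ) + (p - 1) = ((m + 1 : ℕ) : ℝ) := by
      push_cast
      linear_combination hpm
    have e3 : ((lam * r) ^ p) ^ m * (lam * r) ^ (p - 1) = lam ^ (m + 1) * r ^ (m + 1) := by
      rw [e1, ← rpow_add hy, e2, rpow_natCast, mul_pow]
    have hA : ((m : ℝ) + 1) * ((lam * r) ^ p) ^ m * (lam * p * (lam * r) ^ (p - 1))
        = ((m : ℝ) + 2) * lam ^ (m + 2) * r ^ (m + 1) := by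
      have h5 : ((m : ℝ) + 1) * ((lam * r) ^ p) ^ m * (lam * p * (lam * r) ^ (p - 1))
          = (p * ((m : ℝ) + 1)) * lam * (((lam * r) ^ p) ^ m * (lam * r) ^ (p - 1)) := by ring
      rw [h5, e3, hpm]; ring
    have hnum : ((m : ℝ) + 1) * ((lam * r) ^ p) ^ m * (lam * p * (lam * r) ^ (p - 1))
            * (1 + (lam * r) ^ p) ^ (m + 1)
          - ((lam * r) ^ p) ^ (m + 1)
            * (((m : ℝ) + 1) * (1 + (lam * r) ^ p) ^ m * (lam * p * (lam * r) ^ (p - 1)))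
        = (((m : ℝ) + 2) * lam ^ (m + 2) * r ^ (m + 1)) * (1 + (lam * r) ^ p) ^ m := by
      calc ((m : ℝ) + 1) * ((lam * r) ^ p) ^ m * (lam * p * (lam * r) ^ (p - 1))
            * (1 + (lam * r) ^ p) ^ (m + 1)
          - ((lam * r) ^ p) ^ (m + 1)
            * (((m : ℝ) + 1) * (1 + (lam * r) ^ p) ^ m * (lam * p * (lam * r) ^ (p - 1)))
          = (((m : ℝ) + 1) * ((lam * r) ^ p) ^ m * (lam * p * (lam * r) ^ (p - 1)))
            * (1 + (lam * r) ^ p) ^ m := by ring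
        _ = _ := by rw [hA]
    have hrpow : (1 + (lam * r) ^ p) ^ (-((m : ℝ) + 2))
        = ((1 + (lam * r) ^ p) ^ (m + 2 : ℕ))⁻¹ := by
      rw [show -((m : ℝ) + 2) = -((m + 2 : ℕ) : ℝ) by push_cast; ring,
        rpow_neg hT.le, rpow_natCast]
    rw [hrpow, hnum]
    have hTne : (1 + (lam * r) ^ p) ≠ 0 := hT.ne'
    field_simp
    ring
  -- continuity of the inner function
  have hscont : Continuous (fun t : ℝ => (lam * t) ^ p) := by
    apply (continuous_const.mul continuous_id).rpow_const
    exact fun x => Or.inr hp.le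
  have hs0 : (lam * (0 : ℝ)) ^ p = 0 := by
    rw [mul_zero]; exact zero_rpow hp.ne'
  -- continuity at 0
  have hFcont : ContinuousWithinAt (fun t : ℝ => c / ((m : ℝ) + 2) *
      (((lam * t) ^ p) ^ (m + 1) / (1 + (lam * t) ^ p) ^ (m + 1))) (Ici 0) 0 := by
    apply ContinuousAt.continuousWithinAt
    apply ContinuousAt.mul continuousAt_const
    apply ContinuousAt.div ((hscont.pow (m + 1)).continuousAt)
      (((continuous_const.add hscont).pow (m + 1)).continuousAt)
    simp [hs0, zero_rpow hp.ne']
  -- limit at infinity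
  have hstend : Tendsto (fun t : ℝ => (lam * t) ^ p) atTop atTop := by
    have := (tendsto_rpow_atTop hp).comp (tendsto_id.const_mul_atTop hlam)
    simpa [Function.comp_def] using this
  have h0 : Tendsto (fun x : ℝ => (1 + x)⁻¹) atTop (𝓝 0) := by
    have := tendsto_inv_atTop_zero.comp (tendsto_atTop_add_const_left atTop (1 : ℝ) tendsto_id)
    simpa [Function.comp_def] using this
  have hbase : Tendsto (fun x : ℝ => x / (1 + x)) atTop (𝓝 1) := by
    have h1 : Tendsto (fun x : ℝ => 1 - (1 + x)⁻¹) atTop (𝓝 (1 - 0)) :=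
      tendsto_const_nhds.sub h0
    rw [sub_zero] at h1
    apply h1.congr'
    filter_upwards [eventually_gt_atTop (0 : ℝ)] with x hx
    have hne : (1 : ℝ) + x ≠ 0 := by linarith
    field_simp
    ring
  have hFtend : Tendsto (fun t : ℝ => c / ((m : ℝ) + 2) *
      (((lam * t) ^ p) ^ (m + 1) / (1 + (lam * t) ^ p) ^ (m + 1))) atTop
      (𝓝 (c / ((m : ℝ) + 2))) := by
    have h2 : Tendsto (fun r : ℝ => ((lam * r) ^ p / (1 + (lam * r) ^ p)) ^ (m + 1)) atTop
        (𝓝 (1 ^ (m + 1))) := by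
      have := (hbase.comp hstend).pow (m + 1)
      simpa [Function.comp] using this
    rw [one_pow] at h2
    have h3 := h2.const_mul (c / ((m : ℝ) + 2))
    rw [mul_one] at h3
    apply h3.congr
    intro r
    rw [div_pow]
  -- nonnegativity
  have hnonneg : ∀ r ∈ Ioi (0 : ℝ), 0 ≤ r ^ (m + 1) *
      (c * lam ^ (m + 2) * (1 + (lam * r) ^ p) ^ (-((m : ℝ) + 2))) := by
    intro r hr
    have hr : (0 : ℝ) < r := hr
    have hy : 0 < lam * r := mul_pos hlam hr
    have hS : 0 < (lam * r) ^ p := rpow_pos_of_pos hy p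
    have h4 : (0 : ℝ) < (1 + (lam * r) ^ p) ^ (-((m : ℝ) + 2)) := by
      apply rpow_pos_of_pos; linarith
    positivity
  have hF0 : c / ((m : ℝ) + 2) *
      (((lam * (0 : ℝ)) ^ p) ^ (m + 1) / (1 + (lam * (0 : ℝ)) ^ p) ^ (m + 1)) = 0 := by
    simp [hs0, zero_rpow hp.ne']
  constructor
  · exact integrableOn_Ioi_deriv_of_nonneg hFcont hderiv hnonneg hFtend
  · rw [integral_Ioi_of_hasDerivAt_of_nonneg hFcont hderiv hnonneg hFtend, hF0, sub_zero]

/-- **Total mass of the explicit stationary solutions.**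
For `N ≥ 2` and `λ > 0`, `X_λ(x) = (N^{2N−1}/(N−1)^{N−1}) λ^N (1+|λx|^{N/(N−1)})^{−N}`
is integrable on `ℝ^N` and `∫ X_λ = ω_N (N²/(N−1))^{N−1}`, where
`ω_N = N·vol(B₁)` is the surface measure of the unit sphere; in particular the total
mass is independent of `λ`. -/
theorem mass_of_stationary_solution
    (N : ℕ) (hN : 2 ≤ N)
    (lam : ℝ) (hlam : 0 < lam)
    (X : EuclideanSpace ℝ (Fin N) → ℝ)
    (hX : ∀ x : EuclideanSpace ℝ (Fin N),
      X x = ((N : ℝ) ^ (2 * N - 1) / ((N : ℝ) - 1) ^ (N - 1)) * lam ^ N *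
        (1 + ‖lam • x‖ ^ ((N : ℝ) / ((N : ℝ) - 1))) ^ (-(N : ℝ)))
    (ωN : ℝ)
    (hω : ωN = (N : ℝ) * (volume (Metric.ball (0 : EuclideanSpace ℝ (Fin N)) 1)).toReal) :
    Integrable X volume ∧
    ∫ x : EuclideanSpace ℝ (Fin N), X x
      = ωN * ((N : ℝ) ^ 2 / ((N : ℝ) - 1)) ^ (N - 1) := by
  obtain ⟨m, rfl⟩ : ∃ m, N = m + 2 := ⟨N - 2, by omega⟩
  have hm1 : (0 : ℝ) < (m : ℝ) + 1 := by positivity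
  have hm2 : (0 : ℝ) < (m : ℝ) + 2 := by positivity
  set p : ℝ := ((m : ℝ) + 2) / ((m : ℝ) + 1) with hpdef
  set c : ℝ := ((m : ℝ) + 2) ^ (2 * m + 3) / ((m : ℝ) + 1) ^ (m + 1) with hcdef
  have hp : 0 < p := by rw [hpdef]; positivity
  have hc : 0 < c := by rw [hcdef]; positivity
  have hpm : p * ((m : ℝ) + 1) = (m : ℝ) + 2 := by rw [hpdef]; field_simp
  have hp1 : 1 < p := by
    rw [hpdef, lt_div_iff₀ hm1]; linarith
  -- rewrite X in normal form
  have hX' : ∀ x : EuclideanSpace ℝ (Fin (m + 2)),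
      X x = c * lam ^ (m + 2) * (1 + (lam * ‖x‖) ^ p) ^ (-((m : ℝ) + 2)) := by
    intro x
    rw [hX x]
    have hnorm : ‖lam • x‖ = lam * ‖x‖ := by
      rw [norm_smul, Real.norm_eq_abs, abs_of_pos hlam]
    rw [hnorm, show 2 * (m + 2) - 1 = 2 * m + 3 from by omega,
      show (m + 2) - 1 = m + 1 from by omega, hcdef, hpdef]
    push_cast
    rw [show (m : ℝ) + 2 - 1 = (m : ℝ) + 1 from by ring]
  obtain ⟨hint1, hval1⟩ := mass_aux m lam hlam c hc p hp hpm
  haveI : Nontrivial (EuclideanSpace ℝ (Fin (m + 2))) :=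
    Module.nontrivial_of_finrank_pos (R := ℝ)
      (by rw [finrank_euclideanSpace_fin]; omega)
  -- integrability via the Japanese bracket bound
  have hfinrank : ((Module.finrank ℝ (EuclideanSpace ℝ (Fin (m + 2)))) : ℝ)
      < p * ((m : ℝ) + 2) := by
    rw [finrank_euclideanSpace_fin]
    push_cast
    nlinarith [hp1, hm2]
  have hIbase : Integrable (fun x : EuclideanSpace ℝ (Fin (m + 2)) =>
      (1 + ‖x‖) ^ (-(p * ((m : ℝ) + 2)))) volume := integrable_one_add_norm hfinrank
  have hXcont : Continuous X := by
    have hXfun : X = fun x : EuclideanSpace ℝ (Fin (m + 2)) =>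
        c * lam ^ (m + 2) * (1 + (lam * ‖x‖) ^ p) ^ (-((m : ℝ) + 2)) := funext hX'
    rw [hXfun]
    apply continuous_const.mul
    apply Continuous.rpow_const
    · exact continuous_const.add
        ((continuous_const.mul continuous_norm).rpow_const fun x => Or.inr hp.le)
    · intro x
      left
      have h1 : 0 ≤ (lam * ‖x‖) ^ p :=
        Real.rpow_nonneg (mul_nonneg hlam.le (norm_nonneg x)) p
      positivity
  set M : ℝ := max 1 lam⁻¹ with hMdef
  have hM1 : (1 : ℝ) ≤ M := le_max_left _ _
  have hM0 : (0 : ℝ) < M := by linarith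
  have hMl : lam⁻¹ ≤ M := le_max_right _ _
  set K : ℝ := ((2 * M) ^ p) ^ (m + 2) with hKdef
  have hK : 0 < K := by
    rw [hKdef]
    have : (0 : ℝ) < (2 * M) ^ p := Real.rpow_pos_of_pos (by linarith) p
    positivity
  have hbound : ∀ x : EuclideanSpace ℝ (Fin (m + 2)),
      ‖X x‖ ≤ (c * lam ^ (m + 2) * K) * (1 + ‖x‖) ^ (-(p * ((m : ℝ) + 2))) := by
    intro x
    set u : ℝ := ‖x‖ with hudef
    have hu : 0 ≤ u := norm_nonneg x
    have ht : 0 ≤ lam * u := mul_nonneg hlam.le hu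
    have htp : 0 ≤ (lam * u) ^ p := Real.rpow_nonneg ht p
    have ha : (0 : ℝ) < 1 + (lam * u) ^ p := by linarith
    have hb : (0 : ℝ) < 1 + u := by linarith
    have hXnn : 0 ≤ X x := by
      rw [hX' x]
      have := Real.rpow_nonneg ha.le (-((m : ℝ) + 2))
      positivity
    rw [Real.norm_eq_abs, abs_of_nonneg hXnn, hX' x]
    have h1 : 1 + u ≤ 2 * M * max 1 (lam * u) := by
      have hmax1 : (1 : ℝ) ≤ max 1 (lam * u) := le_max_left _ _
      have hmaxt : lam * u ≤ max 1 (lam * u) := le_max_right _ _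
      have hub : u ≤ M * (lam * u) := by
        calc u = lam⁻¹ * (lam * u) := by field_simp
          _ ≤ M * (lam * u) := mul_le_mul_of_nonneg_right hMl ht
      nlinarith
    have h2 : (1 + u) ^ p ≤ (2 * M * max 1 (lam * u)) ^ p :=
      Real.rpow_le_rpow hb.le h1 hp.le
    have h3 : (2 * M * max 1 (lam * u)) ^ p = (2 * M) ^ p * (max 1 (lam * u)) ^ p :=
      Real.mul_rpow (by linarith) (le_max_of_le_left zero_le_one)
    have h4 : (max 1 (lam * u)) ^ p ≤ 1 + (lam * u) ^ p := by
      rcases le_total (lam * u) 1 with h | h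
      · rw [max_eq_left h, Real.one_rpow]; linarith
      · rw [max_eq_right h]; linarith
    have h5 : (1 + u) ^ p ≤ (2 * M) ^ p * (1 + (lam * u) ^ p) := by
      refine h2.trans ?_
      rw [h3]
      exact mul_le_mul_of_nonneg_left h4 (Real.rpow_nonneg (by linarith) p)
    have h6 : (1 + u) ^ (p * ((m : ℝ) + 2)) ≤ K * (1 + (lam * u) ^ p) ^ (m + 2 : ℕ) := by
      have e : (1 + u) ^ (p * ((m : ℝ) + 2)) = ((1 + u) ^ p) ^ (m + 2 : ℕ) := by
        rw [show p * ((m : ℝ) + 2) = p * ((m + 2 : ℕ) : ℝ) by push_cast; ring,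
          Real.rpow_mul hb.le, Real.rpow_natCast]
      rw [e, hKdef, ← mul_pow]
      exact pow_le_pow_left₀ (Real.rpow_nonneg hb.le p) h5 (m + 2)
    have hrw1 : (1 + (lam * u) ^ p) ^ (-((m : ℝ) + 2))
        = ((1 + (lam * u) ^ p) ^ (m + 2 : ℕ))⁻¹ := by
      rw [show -((m : ℝ) + 2) = -((m + 2 : ℕ) : ℝ) by push_cast; ring,
        Real.rpow_neg ha.le, Real.rpow_natCast]
    have hrw2 : (1 + u) ^ (-(p * ((m : ℝ) + 2)))
        = ((1 + u) ^ (p * ((m : ℝ) + 2)))⁻¹ := Real.rpow_neg hb.le _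
    have hApos : (0 : ℝ) < (1 + (lam * u) ^ p) ^ (m + 2 : ℕ) := by positivity
    have hBpos : (0 : ℝ) < (1 + u) ^ (p * ((m : ℝ) + 2)) := Real.rpow_pos_of_pos hb _
    have hkey : ((1 + (lam * u) ^ p) ^ (m + 2 : ℕ))⁻¹
        ≤ K * ((1 + u) ^ (p * ((m : ℝ) + 2)))⁻¹ := by
      have h7 : K⁻¹ * (1 + u) ^ (p * ((m : ℝ) + 2)) ≤ (1 + (lam * u) ^ p) ^ (m + 2 : ℕ) := by
        rw [inv_mul_le_iff₀ hK]
        exact h6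
      calc ((1 + (lam * u) ^ p) ^ (m + 2 : ℕ))⁻¹
          ≤ (K⁻¹ * (1 + u) ^ (p * ((m : ℝ) + 2)))⁻¹ :=
            inv_anti₀ (by positivity) h7
        _ = K * ((1 + u) ^ (p * ((m : ℝ) + 2)))⁻¹ := by rw [mul_inv, inv_inv]
    calc c * lam ^ (m + 2) * (1 + (lam * u) ^ p) ^ (-((m : ℝ) + 2))
        = c * lam ^ (m + 2) * ((1 + (lam * u) ^ p) ^ (m + 2 : ℕ))⁻¹ := by rw [hrw1]
      _ ≤ c * lam ^ (m + 2) * (K * ((1 + u) ^ (p * ((m : ℝ) + 2)))⁻¹) :=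
          mul_le_mul_of_nonneg_left hkey (by positivity)
      _ = (c * lam ^ (m + 2) * K) * (1 + u) ^ (-(p * ((m : ℝ) + 2))) := by
          rw [hrw2]; ring
  have hIntX : Integrable X volume := by
    refine Integrable.mono' (hIbase.const_mul (c * lam ^ (m + 2) * K))
      hXcont.aestronglyMeasurable ?_
    exact Filter.Eventually.of_forall hbound
  refine ⟨hIntX, ?_⟩
  -- the value of the integral
  have hXfun : X = fun x : EuclideanSpace ℝ (Fin (m + 2)) =>
      (fun r : ℝ => c * lam ^ (m + 2) * (1 + (lam * r) ^ p) ^ (-((m : ℝ) + 2))) ‖x‖ :=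
    funext fun x => hX' x
  rw [hXfun, integral_fun_norm_addHaar volume
    (fun r : ℝ => c * lam ^ (m + 2) * (1 + (lam * r) ^ p) ^ (-((m : ℝ) + 2)))]
  simp only [finrank_euclideanSpace_fin, nsmul_eq_mul, smul_eq_mul,
    show m + 2 - 1 = m + 1 from by omega]
  rw [hval1, hω]
  push_cast
  rw [div_pow, ← pow_mul]
  rw [show (m : ℝ) + 2 - 1 = (m : ℝ) + 1 from by ring]
  rw [hcdef]
  field_simp
  simp only [Measure.real]
  ring
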